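/- A future-directed causal curve in Minkowski space-time of finite parameter length acquires a future endpoint: if b < ∞ and c : [a,b) → 𝕄 is a future-directed causal curve parametrized by Euclidean arc length, then the limit y = lim_{s→b⁻} c(s) exists in 𝕄, and the extension of c to [a,b] by c(b) = y is again a future-directed causal curve (in particular c(s) ≤ y and c(s) ≠ y for all s < b). Consequently, a future-directed causal curve parametrized by arc length is future-endless if and only if its parameter domain is unbounded above. -/

import Mathlib

noncomputable section

open Set Filter

/-- Minkowski space-time `𝕄 = ℝ × EuclideanSpace ℝ (Fin 3)`, equipped with the Euclidean
norm `‖(t,x)‖ = √(t² + ‖x‖²)` (i.e. the `L²` product norm). -/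
abbrev Mink : Type := WithLp 2 (ℝ × EuclideanSpace ℝ (Fin 3))

/-- The future causal cone `C = {(t,x) : ‖x‖ ≤ t}`. -/
def causalCone : Set Mink := {p | ‖p.ofLp.2‖ ≤ p.ofLp.1}

/-- The future chronological cone `C° = {(t,x) : ‖x‖ < t}` (the interior of `C`). -/
def chronCone : Set Mink := {p | ‖p.ofLp.2‖ < p.ofLp.1}

/-- `causalLE x y` (written `x ≤ y`): `x` causally precedes `y`, i.e. `y - x ∈ C`. -/
def causalLE (x y : Mink) : Prop := y - x ∈ causalCone

/-- `chronLT x y` (written `x ≪ y`): `x` chronologically precedes `y`, i.e. `y - x ∈ C°`. -/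
def chronLT (x y : Mink) : Prop := y - x ∈ chronCone

/-- The chronological past `I⁻(x) = {z : z ≪ x}`. -/
def Iminus (x : Mink) : Set Mink := {z | chronLT z x}

/-- The causal past `J⁻(x) = {z : z ≤ x}`. -/
def Jminus (x : Mink) : Set Mink := {z | causalLE z x}

/-- The causal future `J⁺(x) = {z : x ≤ z}`. -/
def Jplus (x : Mink) : Set Mink := {z | causalLE x z}

/-- A future-directed causal curve on an interval `I ⊆ ℝ`: a continuous map `c : I → 𝕄`
such that `c t - c s ∈ C` and `c s ≠ c t` whenever `s < t` in `I`. -/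
def IsFDCausalOn (c : ℝ → Mink) (I : Set ℝ) : Prop :=
  ContinuousOn c I ∧ ∀ s ∈ I, ∀ t ∈ I, s < t → c t - c s ∈ causalCone ∧ c s ≠ c t

open Topology

lemma causalCone_isClosed : IsClosed causalCone :=
  isClosed_le ((continuous_snd.comp (WithLp.prod_continuous_ofLp ..)).norm) (continuous_fst.comp (WithLp.prod_continuous_ofLp ..))

lemma causalCone_fst_nonneg {p : Mink} (hp : p ∈ causalCone) : 0 ≤ p.ofLp.1 :=
  le_trans (norm_nonneg _) hp

lemma causalCone_antisymm {p : Mink} (hp : p ∈ causalCone) (hp' : -p ∈ causalCone) : p = 0 := by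
  have h1 : ‖p.ofLp.2‖ ≤ p.ofLp.1 := hp
  have h2 : ‖p.ofLp.2‖ ≤ -p.ofLp.1 := by
    have : ‖(-p).ofLp.2‖ ≤ (-p).ofLp.1 := hp'
    simpa using this
  have hfst : p.ofLp.1 = 0 := by
    have := norm_nonneg p.ofLp.2; linarith
  have hsnd : p.ofLp.2 = 0 := by
    have : ‖p.ofLp.2‖ ≤ 0 := by linarith
    simpa using le_antisymm this (norm_nonneg _)
  exact (WithLp.ofLp_injective 2) (Prod.ext hfst hsnd)

lemma causalCone_norm_le {p : Mink} (hp : p ∈ causalCone) : ‖p‖ ≤ Real.sqrt 2 * p.ofLp.1 := by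
  have h1 : 0 ≤ p.ofLp.1 := causalCone_fst_nonneg hp
  rw [WithLp.prod_norm_eq_of_L2]
  have hfst : ‖p.fst‖ = p.ofLp.1 := by rw [Real.norm_eq_abs, abs_of_nonneg (a := p.fst) h1]; rfl
  rw [hfst]
  have h2 : p.ofLp.1 ^ 2 + ‖p.snd‖ ^ 2 ≤ 2 * p.ofLp.1 ^ 2 := by
    have : ‖p.snd‖ ^ 2 ≤ p.ofLp.1 ^ 2 := pow_le_pow_left₀ (norm_nonneg _) hp 2
    linarith
  calc Real.sqrt (p.ofLp.1 ^ 2 + ‖p.snd‖ ^ 2) ≤ Real.sqrt (2 * p.ofLp.1 ^ 2) := Real.sqrt_le_sqrt h2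
    _ = Real.sqrt 2 * p.ofLp.1 := by
        rw [Real.sqrt_mul (by norm_num), Real.sqrt_sq h1]

lemma time_mono {c : ℝ → Mink} {I : Set ℝ}
    (hI : ∀ s ∈ I, ∀ t ∈ I, s < t → c t - c s ∈ causalCone) :
    MonotoneOn (fun r => (c r).ofLp.1) I := by
  intro s hs t ht hst
  rcases eq_or_lt_of_le hst with rfl | h
  · exact le_refl _
  · have h0 := causalCone_fst_nonneg (hI s hs t ht h)
    have h1 : (0:ℝ) ≤ (c t).ofLp.1 - (c s).ofLp.1 := h0
    simp only []
    linarith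

lemma causal_eVariationOn_le {c : ℝ → Mink} {I : Set ℝ}
    (hI : ∀ s ∈ I, ∀ t ∈ I, s < t → c t - c s ∈ causalCone)
    {x y : ℝ} (hsub : Icc x y ⊆ I) :
    eVariationOn c (Icc x y) ≤ ENNReal.ofReal (Real.sqrt 2 * ((c y).ofLp.1 - (c x).ofLp.1)) := by
  rcases le_or_gt x y with hxy | hxy
  swap
  · rw [Set.Icc_eq_empty (not_le.mpr hxy)]
    simp [eVariationOn.subsingleton]
  have hx : x ∈ I := hsub ⟨le_rfl, hxy⟩
  have hy : y ∈ I := hsub ⟨hxy, le_rfl⟩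
  have hT : MonotoneOn (fun r => (c r).ofLp.1) I := time_mono hI
  apply iSup_le
  rintro ⟨n, u, hu, us⟩
  have hmem : ∀ i, u i ∈ I := fun i => hsub (us i)
  have key : ∀ i, edist (c (u (i+1))) (c (u i)) ≤
      ENNReal.ofReal (Real.sqrt 2 * ((c (u (i+1))).ofLp.1 - (c (u i)).ofLp.1)) := by
    intro i
    rcases eq_or_lt_of_le (hu (Nat.le_succ i)) with he | hlt
    · rw [← he]; simp
    · have hcone := hI _ (hmem i) _ (hmem (i+1)) hlt
      rw [edist_dist, dist_eq_norm]
      exact ENNReal.ofReal_le_ofReal (causalCone_norm_le hcone)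
  calc (∑ i ∈ Finset.range n, edist (c (u (i+1))) (c (u i)))
      ≤ ∑ i ∈ Finset.range n, ENNReal.ofReal (Real.sqrt 2 * ((c (u (i+1))).ofLp.1 - (c (u i)).ofLp.1)) :=
        Finset.sum_le_sum fun i _ => key i
    _ = ENNReal.ofReal (∑ i ∈ Finset.range n, Real.sqrt 2 * ((c (u (i+1))).ofLp.1 - (c (u i)).ofLp.1)) := by
        rw [ENNReal.ofReal_sum_of_nonneg]
        intro i _
        have h1 : (c (u i)).ofLp.1 ≤ (c (u (i+1))).ofLp.1 := hT (hmem i) (hmem (i+1)) (hu (Nat.le_succ i))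
        have h2 : (0:ℝ) ≤ Real.sqrt 2 := Real.sqrt_nonneg 2
        nlinarith
    _ = ENNReal.ofReal (Real.sqrt 2 * ((c (u n)).ofLp.1 - (c (u 0)).ofLp.1)) := by
        rw [← Finset.mul_sum, Finset.sum_range_sub (fun i => (c (u i)).ofLp.1)]
    _ ≤ ENNReal.ofReal (Real.sqrt 2 * ((c y).ofLp.1 - (c x).ofLp.1)) := by
        apply ENNReal.ofReal_le_ofReal
        have h1 := hT (hmem n) hy (us n).2
        have h2 := hT hx (hmem 0) (us 0).1
        have h3 : (0:ℝ) ≤ Real.sqrt 2 := Real.sqrt_nonneg 2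
        nlinarith

/-- A future-directed causal curve of finite parameter length acquires a future endpoint:
if `c : [a,b) → 𝕄` (with `b < ∞`) is future-directed causal and parametrized by Euclidean
arc length, then `y = lim_{s→b⁻} c s` exists, the extension of `c` to `[a,b]` by `c b = y`
is again a future-directed causal curve (in particular `c s ≤ y` and `c s ≠ y` for `s < b`).
Consequently (second conjunct) a future-directed causal curve parametrized by arc length on
a domain unbounded above has no future endpoint, so such a curve is future-endless iff its
parameter domain is unbounded above. -/
theorem minkowski_finite_length_causal_curve_has_endpoint (a b : ℝ) (hab : a < b)
    (c : ℝ → Mink) (hc : IsFDCausalOn c (Set.Ico a b))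
    (harc : ∀ s ∈ Set.Ico a b, eVariationOn c (Set.Icc a s) = ENNReal.ofReal (s - a)) :
    (∃ y : Mink,
      Filter.Tendsto c (nhdsWithin b (Set.Iio b)) (nhds y) ∧
      (∀ s ∈ Set.Ico a b, causalLE (c s) y ∧ c s ≠ y) ∧
      IsFDCausalOn (Function.update c b y) (Set.Icc a b)) ∧
    (∀ (a' : ℝ) (c' : ℝ → Mink), IsFDCausalOn c' (Set.Ici a') →
      (∀ s : ℝ, a' ≤ s → eVariationOn c' (Set.Icc a' s) = ENNReal.ofReal (s - a')) →
      ¬ ∃ y : Mink, Filter.Tendsto c' Filter.atTop (nhds y)) := by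
  obtain ⟨hcont, hcaus⟩ := hc
  constructor
  · -- part 1
    have hvar : ∀ s t : ℝ, a ≤ s → s ≤ t → t < b →
        eVariationOn c (Icc s t) = ENNReal.ofReal (t - s) := by
      intro s t has hst htb
      have h1 := harc s ⟨has, lt_of_le_of_lt hst htb⟩
      have h2 := harc t ⟨has.trans hst, htb⟩
      have hadd := eVariationOn.Icc_add_Icc c (s := (univ : Set ℝ)) has hst (mem_univ s)
      simp only [Set.univ_inter] at hadd
      rw [h1, h2] at hadd
      have h3 : ENNReal.ofReal (t - a) = ENNReal.ofReal (s - a) + ENNReal.ofReal (t - s) := by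
        rw [← ENNReal.ofReal_add (by linarith) (by linarith)]
        ring_nf
      rw [h3] at hadd
      exact (ENNReal.add_right_inj (by simp)).mp hadd
    have hdist : ∀ s t : ℝ, s ∈ Ico a b → t ∈ Ico a b → s ≤ t → dist (c s) (c t) ≤ t - s := by
      intro s t hs ht hst
      have h1 : edist (c s) (c t) ≤ eVariationOn c (Icc s t) :=
        eVariationOn.edist_le c ⟨le_rfl, hst⟩ ⟨hst, le_rfl⟩
      rw [hvar s t hs.1 hst ht.2, edist_dist] at h1
      exact (ENNReal.ofReal_le_ofReal_iff (by linarith)).mp h1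
    have hcauchy : Cauchy (Filter.map c (𝓝[<] b)) := by
      rw [Metric.cauchy_iff]
      refine ⟨Filter.map_neBot, ?_⟩
      intro ε hε
      set s0 := max a (b - ε/2) with hs0
      have hs0b : s0 < b := max_lt hab (by linarith)
      have hs0a : a ≤ s0 := le_max_left _ _
      have hs0e : b - ε/2 ≤ s0 := le_max_right _ _
      refine ⟨c '' Ioo s0 b, image_mem_map (Ioo_mem_nhdsLT_of_mem ⟨hs0b, le_rfl⟩), ?_⟩
      rintro x ⟨u, hu, rfl⟩ y ⟨v, hv, rfl⟩
      have hu' : u ∈ Ico a b := ⟨hs0a.trans hu.1.le, hu.2⟩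
      have hv' : v ∈ Ico a b := ⟨hs0a.trans hv.1.le, hv.2⟩
      rcases le_total u v with h | h
      · have := hdist u v hu' hv' h
        have h2 : v - u < ε := by
          have := hu.1; have := hv.2; linarith
        linarith
      · have := hdist v u hv' hu' h
        have h2 : u - v < ε := by
          have := hv.1; have := hu.2; linarith
        rw [dist_comm] at this
        linarith
    obtain ⟨y, hy⟩ := CompleteSpace.complete hcauchy
    have hy' : Tendsto c (𝓝[<] b) (𝓝 y) := hy
    have hle : ∀ s ∈ Ico a b, causalLE (c s) y := by
      intro s hs
      have htend : Tendsto (fun t => c t - c s) (𝓝[<] b) (𝓝 (y - c s)) :=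
        hy'.sub tendsto_const_nhds
      apply causalCone_isClosed.mem_of_tendsto htend
      filter_upwards [Ioo_mem_nhdsLT_of_mem ⟨hs.2, le_rfl⟩] with t ht
      exact (hcaus s hs t ⟨hs.1.trans ht.1.le, ht.2⟩ ht.1).1
    have hne : ∀ s ∈ Ico a b, c s ≠ y := by
      intro s hs heq
      set t := (s + b) / 2 with htdef
      have hst : s < t := by rw [htdef]; linarith [hs.2]
      have htb : t < b := by rw [htdef]; linarith [hs.2]
      have ht : t ∈ Ico a b := ⟨hs.1.trans hst.le, htb⟩
      obtain ⟨h1, h2⟩ := hcaus s hs t ht hst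
      have h3 : causalLE (c t) y := hle t ht
      rw [← heq] at h3
      have h4 : c t - c s = 0 := causalCone_antisymm h1 (by rw [neg_sub]; exact h3)
      exact h2 (by rw [sub_eq_zero] at h4; exact h4.symm)
    have hcont' : ContinuousOn (Function.update c b y) (Icc a b) := by
      intro x hx
      rcases eq_or_lt_of_le hx.2 with heq | hxb
      · subst heq
        unfold ContinuousWithinAt
        have hIcc : Icc a x = insert x (Ico a x) := (Set.Ico_insert_right hx.1).symm
        rw [hIcc, nhdsWithin_insert, Function.update_self, Filter.tendsto_sup]
        constructor
        · simpa [Function.update_self] using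
            tendsto_pure_nhds (Function.update c x y) x
        · rw [nhdsWithin_Ico_eq_nhdsLT hab]
          apply hy'.congr'
          filter_upwards [self_mem_nhdsWithin] with t ht
          exact (Function.update_of_ne (ne_of_lt (mem_Iio.mp ht)) y c).symm
      · have hIoo : Function.update c b y =ᶠ[𝓝 x] c := by
          filter_upwards [Iio_mem_nhds hxb] with t ht
          exact Function.update_of_ne (ne_of_lt (mem_Iio.mp ht)) y c
        have hcx : ContinuousWithinAt c (Icc a b) x := by
          have h1 : 𝓝[Icc a b] x = 𝓝[Ico a b] x := by
            rw [nhdsWithin_restrict' (Icc a b) (Iio_mem_nhds hxb)]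
            congr 1
            ext z
            constructor
            · rintro ⟨⟨hz1, _⟩, hz3⟩; exact ⟨hz1, hz3⟩
            · rintro ⟨hz1, hz3⟩; exact ⟨⟨hz1, le_of_lt hz3⟩, hz3⟩
          unfold ContinuousWithinAt
          rw [h1]
          exact hcont x ⟨hx.1, hxb⟩
        exact hcx.congr_of_eventuallyEq (hIoo.filter_mono nhdsWithin_le_nhds)
          (Function.update_of_ne (ne_of_lt hxb) y c)
    refine ⟨y, hy', fun s hs => ⟨hle s hs, hne s hs⟩, hcont', ?_⟩
    intro s hs t ht hst
    have hsb : s < b := lt_of_lt_of_le hst ht.2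
    rw [Function.update_of_ne (ne_of_lt hsb) y c]
    rcases eq_or_lt_of_le ht.2 with heq | htb
    · rw [heq, Function.update_self]
      exact ⟨hle s ⟨hs.1, hsb⟩, hne s ⟨hs.1, hsb⟩⟩
    · rw [Function.update_of_ne (ne_of_lt htb) y c]
      exact hcaus s ⟨hs.1, hsb⟩ t ⟨ht.1, htb⟩ hst
  · -- part 2
    rintro a' c' ⟨hcont', hcaus'⟩ harc' ⟨y, hy⟩
    have hIci : ∀ s ∈ Ici a', ∀ t ∈ Ici a', s < t → c' t - c' s ∈ causalCone :=
      fun s hs t ht hst => (hcaus' s hs t ht hst).1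
    have h2pos : (0:ℝ) < Real.sqrt 2 := Real.sqrt_pos.mpr (by norm_num)
    have hT : ∀ s, a' ≤ s → s - a' ≤ Real.sqrt 2 * ((c' s).ofLp.1 - (c' a').ofLp.1) := by
      intro s hs
      have h2 : eVariationOn c' (Icc a' s) ≤
          ENNReal.ofReal (Real.sqrt 2 * ((c' s).ofLp.1 - (c' a').ofLp.1)) :=
        causal_eVariationOn_le hIci Icc_subset_Ici_self
      rw [harc' s hs] at h2
      have hge : (c' a').ofLp.1 ≤ (c' s).ofLp.1 := time_mono hIci self_mem_Ici hs hs
      exact (ENNReal.ofReal_le_ofReal_iff (by nlinarith)).mp h2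
    have hlow : Tendsto (fun s => (c' a').ofLp.1 + (s - a') / Real.sqrt 2) atTop atTop := by
      apply tendsto_atTop_add_const_left
      apply Tendsto.atTop_div_const h2pos
      simpa [sub_eq_add_neg] using tendsto_atTop_add_const_right atTop (-a') tendsto_id
    have hTop : Tendsto (fun s => (c' s).ofLp.1) atTop atTop := by
      apply tendsto_atTop_mono' atTop ?_ hlow
      filter_upwards [eventually_ge_atTop a'] with s hs
      have h1 := hT s hs
      have h2 : (s - a') / Real.sqrt 2 ≤ (c' s).ofLp.1 - (c' a').ofLp.1 := by
        rw [div_le_iff₀ h2pos, mul_comm]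
        exact h1
      show (c' a').ofLp.1 + (s - a') / Real.sqrt 2 ≤ (c' s).ofLp.1
      linarith
    have hfin : Tendsto (fun s => (c' s).ofLp.1) atTop (𝓝 y.ofLp.1) :=
      ((continuous_fst.comp (WithLp.prod_continuous_ofLp ..)).tendsto y).comp hy
    exact not_tendsto_atTop_of_tendsto_nhds hfin hTop
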